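/- arXiv:math/0505652 — 3 statements merged into one kernel-verified Lean document; each statement's English description precedes it below -/
import Mathlib

section
/- Conversely, if f is entire and its Newton map N_f = id − f/f′ is a rational function, then f = p·e^q for some polynomials p and q. -/
open Complex Polynomial

open Complex Polynomial Filter Set

private lemma entire_eq_of_eqOn_open {u v : ℂ → ℂ} (hu : Differentiable ℂ u)
    (hv : Differentiable ℂ v) {U : Set ℂ} (hU : IsOpen U) (hne : U.Nonempty)
    (heq : Set.EqOn u v U) : ∀ z, u z = v z := by
  obtain ⟨z0, hz0⟩ := hne
  have h1 : AnalyticOnNhd ℂ u Set.univ := fun w _ => hu.analyticAt w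
  have h2 : AnalyticOnNhd ℂ v Set.univ := fun w _ => hv.analyticAt w
  have hev : u =ᶠ[nhds z0] v := Filter.eventuallyEq_of_mem (hU.mem_nhds hz0) heq
  exact fun z => h1.eqOn_of_preconnected_of_eventuallyEq h2 isPreconnected_univ
    (Set.mem_univ z0) hev (Set.mem_univ z)

private lemma entire_eq_of_eq_off_pt {u v : ℂ → ℂ} (hu : Differentiable ℂ u)
    (hv : Differentiable ℂ v) (z0 : ℂ) (h : ∀ z, z ≠ z0 → u z = v z) : ∀ z, u z = v z := by
  refine entire_eq_of_eqOn_open hu hv (isOpen_compl_singleton (x := z0)) ⟨z0 + 1, by simp⟩ ?_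
  exact fun z hz => h z hz

private lemma cont_eq_of_eq_off_pt {u v : ℂ → ℂ} (hu : Continuous u)
    (hv : Continuous v) (z0 : ℂ) (h : ∀ z, z ≠ z0 → u z = v z) : ∀ z, u z = v z := by
  have := Continuous.ext_on (dense_compl_singleton z0) hu hv (fun z hz => h z hz)
  exact fun z => congrFun this z

private lemma dvd_of_cont_mul_eval : ∀ (n : ℕ) (C' D : Polynomial ℂ) (u : ℂ → ℂ),
    C'.natDegree ≤ n → Continuous u → (∀ z, u z * C'.eval z = D.eval z) → C' ∣ D := by
  intro n
  induction n with
  | zero =>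
    intro C' D u hdeg hu hEq
    rcases Polynomial.natDegree_eq_zero.mp (Nat.le_zero.mp hdeg) with ⟨c, rfl⟩
    rcases eq_or_ne c 0 with rfl | hc
    · have : D = 0 := Polynomial.zero_of_eval_zero _ (fun z => by
        simpa using (hEq z).symm)
      simp [this]
    · exact (Polynomial.isUnit_C.mpr hc.isUnit).dvd
  | succ n ih =>
    intro C' D u hdeg hu hEq
    rcases Nat.lt_or_ge C'.natDegree (n + 1) with h | h
    · exact ih C' D u (Nat.lt_succ_iff.mp h) hu hEq
    have hCne : C' ≠ 0 := by
      intro h0; rw [h0] at h; simp at h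
    have hdegC : 0 < C'.degree :=
      Polynomial.natDegree_pos_iff_degree_pos.mp (by omega)
    obtain ⟨z0, hz0⟩ := Complex.exists_root hdegC
    obtain ⟨C1, hC1⟩ := Polynomial.dvd_iff_isRoot.mpr hz0
    have hDroot : D.IsRoot z0 := by
      have := hEq z0
      rw [hz0] at this
      simp only [mul_zero] at this
      exact this.symm
    obtain ⟨D1, hD1⟩ := Polynomial.dvd_iff_isRoot.mpr hDroot
    have hC1ne : C1 ≠ 0 := fun h0 => hCne (by simp [hC1, h0])
    have hC1deg : C1.natDegree ≤ n := by
      have : C'.natDegree = 1 + C1.natDegree := by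
        rw [hC1, Polynomial.natDegree_mul (Polynomial.X_sub_C_ne_zero z0) hC1ne,
          Polynomial.natDegree_X_sub_C]
      omega
    have hEq1 : ∀ z, u z * C1.eval z = D1.eval z := by
      apply cont_eq_of_eq_off_pt (by fun_prop) (by fun_prop) z0
      intro z hz
      have := hEq z
      rw [hC1, hD1] at this
      simp only [Polynomial.eval_mul, Polynomial.eval_sub, Polynomial.eval_X,
        Polynomial.eval_C] at this
      have hne : z - z0 ≠ 0 := sub_ne_zero.mpr hz
      apply mul_left_cancel₀ hne
      linear_combination this
    have := ih C1 D1 u hC1deg hu hEq1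
    rw [hC1, hD1]
    exact mul_dvd_mul_left _ this

private lemma exists_antideriv (Q : Polynomial ℂ) : ∃ q : Polynomial ℂ, q.derivative = Q := by
  refine ⟨Q.sum fun n a => Polynomial.C (a / (n + 1)) * Polynomial.X ^ (n + 1), ?_⟩
  rw [Polynomial.sum_def, map_sum]
  conv_rhs => rw [← Polynomial.sum_C_mul_X_pow_eq Q, Polynomial.sum_def]
  apply Finset.sum_congr rfl
  intro n _
  rw [Polynomial.derivative_C_mul_X_pow]
  have hne : ((n : ℂ) + 1) ≠ 0 := Nat.cast_add_one_ne_zero n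
  rw [Nat.add_sub_cancel]
  congr 1
  push_cast
  rw [div_mul_cancel₀ _ hne]

open scoped Classical in
private noncomputable def ordN (f : ℂ → ℂ) (z : ℂ) : ℕ :=
  if h : AnalyticAt ℂ f z then (analyticOrderAt f z).toNat else 0

private lemma order_ne_top {f : ℂ → ℂ} (hf : Differentiable ℂ f) (hne : ∃ z, f z ≠ 0)
    (z0 : ℂ) : analyticOrderAt f z0 ≠ ⊤ := by
  intro htop
  rw [analyticOrderAt_eq_top] at htop
  obtain ⟨z1, hz1⟩ := hne
  have h1 : AnalyticOnNhd ℂ f univ := fun w _ => hf.analyticAt w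
  exact hz1 (h1.eqOn_zero_of_preconnected_of_eventuallyEq_zero isPreconnected_univ
    (mem_univ z0) htop (mem_univ z1))

private lemma order_eq_ordN {f : ℂ → ℂ} (hf : Differentiable ℂ f) (hne : ∃ z, f z ≠ 0)
    (z0 : ℂ) : analyticOrderAt f z0 = (ordN f z0 : ℕ∞) := by
  classical
  rw [ordN, dif_pos (hf.analyticAt z0)]
  exact (ENat.coe_toNat (order_ne_top hf hne z0)).symm

private lemma ord_factor {f : ℂ → ℂ} (hf : Differentiable ℂ f) (hne : ∃ z, f z ≠ 0) (z0 : ℂ) :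
    ∃ g : ℂ → ℂ, AnalyticAt ℂ g z0 ∧ g z0 ≠ 0 ∧
      ∀ᶠ z in nhds z0, f z = (z - z0) ^ (ordN f z0) * g z := by
  have := ((hf.analyticAt z0).analyticOrderAt_eq_natCast (n := ordN f z0)).mp (order_eq_ordN hf hne z0)
  obtain ⟨g, h1, h2, h3⟩ := this
  exact ⟨g, h1, h2, h3.mono fun z hz => by simpa [smul_eq_mul] using hz⟩

private lemma ordN_of_factor {f g : ℂ → ℂ} (hf : Differentiable ℂ f) (z0 : ℂ) (n : ℕ)
    (hg : AnalyticAt ℂ g z0) (hg0 : g z0 ≠ 0)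
    (hfac : ∀ᶠ z in nhds z0, f z = (z - z0) ^ n * g z) : ordN f z0 = n := by
  have : analyticOrderAt f z0 = (n : ℕ∞) :=
    ((hf.analyticAt z0).analyticOrderAt_eq_natCast (n := n)).mpr
      ⟨g, hg, hg0, hfac.mono fun z hz => by simpa [smul_eq_mul] using hz⟩
  classical
  rw [ordN, dif_pos (hf.analyticAt z0), this]
  rfl

private lemma value_ne_zero_of_ordN_eq_zero {f : ℂ → ℂ} (hf : Differentiable ℂ f)
    (hne : ∃ z, f z ≠ 0) (z0 : ℂ) (h0 : ordN f z0 = 0) : f z0 ≠ 0 := by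
  obtain ⟨g, hg, hg0, hfac⟩ := ord_factor hf hne z0
  rw [h0] at hfac
  have h2 : f z0 = g z0 := by simpa using hfac.self_of_nhds
  rw [h2]; exact hg0

private lemma ordN_shift {f1 : ℂ → ℂ} (hf1 : Differentiable ℂ f1) (hne1 : ∃ z, f1 z ≠ 0)
    (z0 : ℂ) {f : ℂ → ℂ} (hf : Differentiable ℂ f) (hff : ∀ z, f z = (z - z0) * f1 z) :
    (∀ w, w ≠ z0 → ordN f w = ordN f1 w) ∧ ordN f z0 = ordN f1 z0 + 1 := by
  constructor
  · intro w hw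
    obtain ⟨g, hg, hg0, hfac⟩ := ord_factor hf1 hne1 w
    have hlin : AnalyticAt ℂ (fun z : ℂ => z - z0) w := analyticAt_id.sub analyticAt_const
    apply ordN_of_factor hf w (ordN f1 w) (hlin.mul hg)
    · exact mul_ne_zero (sub_ne_zero.mpr hw) hg0
    · filter_upwards [hfac] with z hz
      rw [hff z, hz]; simp only [Pi.mul_apply]; ring
  · obtain ⟨g, hg, hg0, hfac⟩ := ord_factor hf1 hne1 z0
    apply ordN_of_factor hf z0 (ordN f1 z0 + 1) hg hg0
    filter_upwards [hfac] with z hz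
    rw [hff z, hz]; ring

private lemma deriv_entire {f : ℂ → ℂ} (hf : Differentiable ℂ f) :
    Differentiable ℂ (deriv f) := by
  have hA : AnalyticOnNhd ℂ f univ := fun w _ => hf.analyticAt w
  exact fun z => ((hA.deriv) z (mem_univ z)).differentiableAt

private lemma eval_ne_zero_exists {B : Polynomial ℂ} (hB : B ≠ 0) : ∃ z, B.eval z ≠ 0 := by
  by_contra h
  push_neg at h
  exact hB (Polynomial.zero_of_eval_zero _ h)

private lemma base_case {f : ℂ → ℂ} (hf : Differentiable ℂ f) (hnv : ∀ z, f z ≠ 0)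
    {A B : Polynomial ℂ} (hB : B ≠ 0)
    (hEq : ∀ z, deriv f z * B.eval z = f z * A.eval z) :
    ∃ p q : Polynomial ℂ, ∀ z, f z = p.eval z * Complex.exp (q.eval z) := by
  have hdf : Differentiable ℂ (deriv f) := deriv_entire hf
  set h : ℂ → ℂ := fun z => deriv f z / f z with hh
  have hcont : Continuous h := hdf.continuous.div hf.continuous hnv
  have hhB : ∀ z, h z * B.eval z = A.eval z := by
    intro z
    have h1 := hEq z
    show deriv f z / f z * B.eval z = A.eval z
    rw [div_mul_eq_mul_div, h1, mul_comm, mul_div_assoc, div_self (hnv z), mul_one]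
  obtain ⟨Q, hQ⟩ := dvd_of_cont_mul_eval B.natDegree B A h le_rfl hcont hhB
  have hfQ : ∀ z, deriv f z = f z * Q.eval z := by
    apply entire_eq_of_eqOn_open hdf (hf.mul Q.differentiable)
      (isOpen_ne_fun B.continuous_aeval continuous_const) (eval_ne_zero_exists hB)
    intro z hz
    have h1 := hEq z
    rw [hQ, Polynomial.eval_mul] at h1
    have hz' : B.eval z ≠ 0 := hz
    apply mul_right_cancel₀ hz'
    simp only [Pi.mul_apply]
    linear_combination h1
  obtain ⟨q, hq⟩ := exists_antideriv Q
  set F : ℂ → ℂ := fun z => f z * Complex.exp (-(q.eval z)) with hF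
  have hFd : Differentiable ℂ F := hf.mul ((q.differentiable.neg).cexp)
  have hFderiv : ∀ z, deriv F z = 0 := by
    intro z
    have h1 : HasDerivAt (fun z : ℂ => -(q.eval z)) (-(q.derivative.eval z)) z :=
      (q.hasDerivAt z).neg
    have h2 : HasDerivAt (fun z : ℂ => Complex.exp (-(q.eval z)))
        (Complex.exp (-(q.eval z)) * (-(q.derivative.eval z))) z := h1.cexp
    have h3 : HasDerivAt F (deriv f z * Complex.exp (-(q.eval z)) +
        f z * (Complex.exp (-(q.eval z)) * (-(q.derivative.eval z)))) z :=
      ((hf z).hasDerivAt).mul h2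
    rw [h3.deriv, hfQ z, hq]
    ring
  have hconst : ∀ z, F z = F 0 := fun z =>
    is_const_of_deriv_eq_zero hFd hFderiv z 0
  refine ⟨Polynomial.C (f 0 * Complex.exp (-(q.eval 0))), q, fun z => ?_⟩
  have this' : f z * Complex.exp (-(q.eval z)) = f 0 * Complex.exp (-(q.eval 0)) := hconst z
  simp only [Polynomial.eval_C]
  have hexp : Complex.exp (-(q.eval z)) * Complex.exp (q.eval z) = 1 := by
    rw [← Complex.exp_add]; simp
  calc f z = f z * (Complex.exp (-(q.eval z)) * Complex.exp (q.eval z)) := by rw [hexp]; ring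
    _ = (f z * Complex.exp (-(q.eval z))) * Complex.exp (q.eval z) := by ring
    _ = (f 0 * Complex.exp (-(q.eval 0))) * Complex.exp (q.eval z) := by rw [this']

private lemma dslope_entire {f : ℂ → ℂ} (hf : Differentiable ℂ f) (z0 : ℂ) :
    Differentiable ℂ (dslope f z0) := by
  have := (Complex.differentiableOn_dslope (Filter.univ_mem : univ ∈ nhds z0)).mpr
    hf.differentiableOn
  exact differentiableOn_univ.mp this

private lemma dslope_fact {f : ℂ → ℂ} (z0 : ℂ) (hfz0 : f z0 = 0) (z : ℂ) :
    f z = (z - z0) * dslope f z0 z := by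
  have := sub_smul_dslope f z0 z
  rw [smul_eq_mul, hfz0, sub_zero] at this
  exact this.symm

private lemma deriv_linear_mul {u : ℂ → ℂ} (hu : Differentiable ℂ u) (z0 z : ℂ) :
    deriv (fun w => (w - z0) * u w) z = u z + (z - z0) * deriv u z := by
  have h1 : HasDerivAt (fun w : ℂ => w - z0) 1 z := (hasDerivAt_id z).sub_const z0
  have h2 : HasDerivAt (fun w => (w - z0) * u w) (1 * u z + (z - z0) * deriv u z) z :=
    h1.mul (hu z).hasDerivAt
  rw [h2.deriv]; ring

private lemma zeros_are_roots {f : ℂ → ℂ} (hf : Differentiable ℂ f) (hne : ∃ z, f z ≠ 0)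
    {A B : Polynomial ℂ} (hEq : ∀ z, deriv f z * B.eval z = f z * A.eval z)
    {z0 : ℂ} (hfz0 : f z0 = 0) : B.eval z0 = 0 := by
  by_contra hB0
  have claim : ∀ k : ℕ, ∃ u : ℂ → ℂ, Differentiable ℂ u ∧
      (∀ z, f z = (z - z0) ^ (k + 1) * u z) ∧
      (∀ z, ((k + 1 : ℂ) * u z + (z - z0) * deriv u z) * B.eval z
        = (z - z0) * u z * A.eval z) := by
    intro k
    induction k with
    | zero =>
      refine ⟨dslope f z0, dslope_entire hf z0, fun z => by
        simpa [pow_one] using dslope_fact z0 hfz0 z, fun z => ?_⟩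
      set u := dslope f z0
      have hfu : ∀ z, f z = (z - z0) * u z := dslope_fact z0 hfz0
      have hderiv : deriv f z = u z + (z - z0) * deriv u z := by
        have : f = fun w => (w - z0) * u w := funext hfu
        rw [this]
        exact deriv_linear_mul (dslope_entire hf z0) z0 z
      have h1 := hEq z
      rw [hderiv, hfu z] at h1
      push_cast
      linear_combination h1
    | succ k ih =>
      obtain ⟨u, hu, hfac, heq⟩ := ih
      have huz0 : u z0 = 0 := by
        have h1 := heq z0
        rw [sub_self, zero_mul, add_zero, zero_mul, zero_mul] at h1
        rcases mul_eq_zero.mp h1 with h | h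
        · rcases mul_eq_zero.mp h with h' | h'
          · exact absurd h' (Nat.cast_add_one_ne_zero k)
          · exact h'
        · exact absurd h hB0
      set v := dslope u z0 with hv
      have hvd : Differentiable ℂ v := dslope_entire hu z0
      have huv : ∀ z, u z = (z - z0) * v z := dslope_fact z0 huz0
      have hderivu : ∀ z, deriv u z = v z + (z - z0) * deriv v z := by
        intro z
        have : u = fun w => (w - z0) * v w := funext huv
        rw [this]
        exact deriv_linear_mul hvd z0 z
      refine ⟨v, hvd, fun z => by rw [hfac z, huv z]; ring, ?_⟩
      have hdv : Differentiable ℂ (deriv v) := deriv_entire hvd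
      apply entire_eq_of_eq_off_pt
        (((hvd.const_mul _).add ((differentiable_id.sub (differentiable_const z0)).mul hdv)).mul
          B.differentiable)
        (((differentiable_id.sub (differentiable_const z0)).mul hvd).mul A.differentiable) z0
      intro z hz
      have h1 := heq z
      rw [huv z, hderivu z] at h1
      have hzne : z - z0 ≠ 0 := sub_ne_zero.mpr hz
      apply mul_left_cancel₀ hzne
      simp only [Pi.mul_apply, Pi.add_apply, Pi.sub_apply, id_eq]
      push_cast at h1 ⊢
      linear_combination h1
  obtain ⟨g, hg, hg0, hfac⟩ := ord_factor hf hne z0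
  obtain ⟨u, hu, hfacu, -⟩ := claim (ordN f z0)
  set n := ordN f z0
  have hev : (fun z => (z - z0) * u z) =ᶠ[nhdsWithin z0 {z0}ᶜ] g := by
    filter_upwards [eventually_nhdsWithin_of_eventually_nhds hfac,
      self_mem_nhdsWithin] with z hz hz'
    have hne' : (z - z0) ≠ 0 := sub_ne_zero.mpr hz'
    have h2 : (z - z0) ^ n * g z = (z - z0) ^ n * ((z - z0) * u z) := by
      rw [← hz, hfacu z]; ring
    exact (mul_left_cancel₀ (pow_ne_zero n hne') h2).symm
  have t1 : Filter.Tendsto (fun z => (z - z0) * u z) (nhdsWithin z0 {z0}ᶜ) (nhds 0) := by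
    have hc : ContinuousAt (fun z => (z - z0) * u z) z0 :=
      ((continuous_id.sub continuous_const).mul hu.continuous).continuousAt
    have : (fun z => (z - z0) * u z) z0 = 0 := by simp
    exact this ▸ hc.continuousWithinAt.tendsto
  have t2 : Filter.Tendsto (fun z => (z - z0) * u z) (nhdsWithin z0 {z0}ᶜ) (nhds (g z0)) :=
    (hg.continuousAt.continuousWithinAt.tendsto).congr' hev.symm
  exact hg0 (tendsto_nhds_unique t2 t1)

private lemma aux_induction : ∀ (n : ℕ) (f : ℂ → ℂ), Differentiable ℂ f → (∃ z, f z ≠ 0) →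
    ∀ (A B : Polynomial ℂ), B ≠ 0 → (∀ z, deriv f z * B.eval z = f z * A.eval z) →
    (∑ w ∈ B.roots.toFinset, ordN f w) ≤ n →
    ∃ p q : Polynomial ℂ, ∀ z, f z = p.eval z * Complex.exp (q.eval z) := by
  intro n
  induction n with
  | zero =>
    intro f hf hne A B hB hEq hsum
    have hnv : ∀ z, f z ≠ 0 := by
      intro z hz
      have hroot : B.eval z = 0 := zeros_are_roots hf hne hEq hz
      have hzmem : z ∈ B.roots.toFinset := by
        rw [Multiset.mem_toFinset, Polynomial.mem_roots hB]; exact hroot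
      have h0 : ordN f z = 0 := Nat.le_zero.mp (le_trans
        (Finset.single_le_sum (fun _ _ => Nat.zero_le _) hzmem) hsum)
      exact value_ne_zero_of_ordN_eq_zero hf hne z h0 hz
    exact base_case hf hnv hB hEq
  | succ n ih =>
    intro f hf hne A B hB hEq hsum
    by_cases hcase : ∀ z, B.eval z = 0 → f z ≠ 0
    · have hnv : ∀ z, f z ≠ 0 := fun z hz =>
        hcase z (zeros_are_roots hf hne hEq hz) hz
      exact base_case hf hnv hB hEq
    · push_neg at hcase
      obtain ⟨z0, hBz0, hfz0⟩ := hcase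
      set f1 := dslope f z0 with hf1def
      have hf1 : Differentiable ℂ f1 := dslope_entire hf z0
      have hff : ∀ z, f z = (z - z0) * f1 z := dslope_fact z0 hfz0
      have hne1 : ∃ z, f1 z ≠ 0 := by
        obtain ⟨z1, h1⟩ := hne
        refine ⟨z1, fun h0 => h1 ?_⟩
        rw [hff z1, h0, mul_zero]
      obtain ⟨B1, hB1⟩ := Polynomial.dvd_iff_isRoot.mpr (hBz0 : B.IsRoot z0)
      have hEq1 : ∀ z, deriv f1 z * B.eval z = f1 z * (A - B1).eval z := by
        apply entire_eq_of_eq_off_pt ((deriv_entire hf1).mul B.differentiable)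
          (hf1.mul (A - B1).differentiable) z0
        intro z hz
        have hzne : z - z0 ≠ 0 := sub_ne_zero.mpr hz
        have h1 := hEq z
        have hder : deriv f z = f1 z + (z - z0) * deriv f1 z := by
          have he : f = fun w => (w - z0) * f1 w := funext hff
          rw [he]
          exact deriv_linear_mul hf1 z0 z
        rw [hder, hff z, hB1] at h1
        rw [hB1]
        simp only [Pi.mul_apply, Polynomial.eval_mul, Polynomial.eval_sub, Polynomial.eval_X,
          Polynomial.eval_C] at h1 ⊢
        apply mul_left_cancel₀ hzne
        linear_combination h1
      have hshift := ordN_shift hf1 hne1 z0 hf hff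
      have hz0mem : z0 ∈ B.roots.toFinset := by
        rw [Multiset.mem_toFinset, Polynomial.mem_roots hB]; exact hBz0
      have hsum1 : (∑ w ∈ B.roots.toFinset, ordN f1 w) ≤ n := by
        have e1 := Finset.sum_erase_add B.roots.toFinset (ordN f) hz0mem
        have e2 := Finset.sum_erase_add B.roots.toFinset (ordN f1) hz0mem
        have e3 : ∑ w ∈ B.roots.toFinset.erase z0, ordN f w
            = ∑ w ∈ B.roots.toFinset.erase z0, ordN f1 w := by
          apply Finset.sum_congr rfl
          intro w hw
          exact hshift.1 w (Finset.mem_erase.mp hw).1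
        have e4 := hshift.2
        omega
      obtain ⟨p, q, hpq⟩ := ih f1 hf1 hne1 (A - B1) B hB hEq1 hsum1
      refine ⟨(Polynomial.X - Polynomial.C z0) * p, q, fun z => ?_⟩
      rw [hff z, hpq z]
      simp only [Polynomial.eval_mul, Polynomial.eval_sub, Polynomial.eval_X, Polynomial.eval_C]
      ring

/-- If `f` is a nonconstant entire function whose Newton map `N_f = id - f/f'`
is a rational function, then `f = p·e^q` for some polynomials `p` and `q`. -/
theorem entire_with_rational_newton_map
    (f : ℂ → ℂ) (hf : Differentiable ℂ f) (hnc : ∀ c : ℂ, f ≠ fun _ => c)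
    (r s : Polynomial ℂ) (hs : s ≠ 0)
    (hrat : ∀ z : ℂ, deriv f z ≠ 0 → s.eval z ≠ 0 →
      z - f z / deriv f z = r.eval z / s.eval z) :
    ∃ p q : Polynomial ℂ, ∀ z : ℂ, f z = p.eval z * Complex.exp (q.eval z) := by
  have hncz : ∃ z, f z ≠ 0 := by
    by_contra h
    push_neg at h
    exact hnc 0 (funext h)
  have hdf : Differentiable ℂ (deriv f) := deriv_entire hf
  set B : Polynomial ℂ := Polynomial.X * s - r with hBdef
  have hU : IsOpen ({z : ℂ | deriv f z ≠ 0} ∩ {z : ℂ | s.eval z ≠ 0}) :=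
    (isOpen_ne_fun hdf.continuous continuous_const).inter
      (isOpen_ne_fun s.continuous continuous_const)
  have hUne : ({z : ℂ | deriv f z ≠ 0} ∩ {z : ℂ | s.eval z ≠ 0}).Nonempty := by
    by_contra h
    rw [Set.not_nonempty_iff_eq_empty] at h
    have hd0 : ∀ z, deriv f z = (fun _ : ℂ => (0:ℂ)) z := by
      apply entire_eq_of_eqOn_open hdf (differentiable_const 0)
        (isOpen_ne_fun s.continuous continuous_const) (eval_ne_zero_exists hs)
      intro z hz
      by_contra hd
      have hmem : z ∈ {z : ℂ | deriv f z ≠ 0} ∩ {z : ℂ | s.eval z ≠ 0} :=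
        ⟨by simpa using hd, hz⟩
      rw [h] at hmem
      exact hmem
    have : f = fun _ => f 0 := funext fun z =>
      is_const_of_deriv_eq_zero hf (fun x => hd0 x) z 0
    exact hnc (f 0) this
  have hEq : ∀ z, deriv f z * B.eval z = f z * s.eval z := by
    apply entire_eq_of_eqOn_open (hdf.mul B.differentiable) (hf.mul s.differentiable)
      hU hUne
    rintro z ⟨h1, h2⟩
    have h3 := hrat z h1 h2
    simp only [Set.mem_setOf_eq] at h1 h2
    rw [hBdef]
    simp only [Polynomial.eval_sub, Polynomial.eval_mul, Polynomial.eval_X, Pi.mul_apply]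
    field_simp at h3
    linear_combination h3
  have hBne : B ≠ 0 := by
    intro h0
    have hf0 : ∀ z, f z = (fun _ : ℂ => (0:ℂ)) z := by
      apply entire_eq_of_eqOn_open hf (differentiable_const 0)
        (isOpen_ne_fun s.continuous continuous_const) (eval_ne_zero_exists hs)
      intro z hz
      have := hEq z
      rw [h0] at this
      simp only [Polynomial.eval_zero, mul_zero] at this
      exact (mul_eq_zero.mp this.symm).resolve_right hz
    exact hnc 0 (funext hf0)
  exact aux_induction (∑ w ∈ B.roots.toFinset, ordN f w) f hf hncz s B hBne hEq le_rfl
end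

section
/- Let g : 𝔻 → 𝔻 be holomorphic, not the identity, with g(0) = 0 and |g′(0)| < 1, and suppose g extends holomorphically to a neighborhood of ζ ∈ ∂𝔻 with g(ζ) = ζ, g′(ζ) real and positive, and the extension maps an arc of ∂𝔻 near ζ into ∂𝔻. Then ζ is a repelling fixed point: g′(ζ) > 1. -/
open Complex Set Metric
open Topology Filter

lemma quad_aux {s c r p : ℝ} (hs : 0 ≤ s) (hc0 : 0 ≤ c) (hc : c < 1) (hr0 : 0 < r)
    (hr : r < 1) (hp : p ≤ s * c)
    (h : s^2 - 2*p + c^2 ≤ r^2 * (1 - 2*p + c^2*s^2)) : s * (1 + c*r) ≤ c + r := by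
  by_contra hA
  push_neg at hA
  have h1 : (0:ℝ) < 1 - c*r := by nlinarith
  have h2 : (0:ℝ) < 1 + c*r := by nlinarith
  have hA' : 0 < s*(1+c*r) - (c+r) := by linarith
  have hB : 0 < (1 - c*r)*s - (c - r) := by
    nlinarith [mul_pos h1 hA', mul_pos hr0 (show (0:ℝ) < 1 - c^2 by nlinarith)]
  nlinarith [mul_pos hA' hB, mul_nonneg (show (0:ℝ) ≤ 1 - r^2 by nlinarith) (sub_nonneg.2 hp)]

lemma mobius_key (a w : ℂ) :
    (‖1 - (starRingEnd ℂ) a * w‖)^2 - (‖w - a‖)^2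
      = (1 - (‖a‖)^2) * (1 - (‖w‖)^2) := by
  simp only [Complex.sq_norm, Complex.normSq_apply, Complex.sub_re, Complex.sub_im,
    Complex.mul_re, Complex.mul_im, Complex.conj_re, Complex.conj_im, Complex.one_re,
    Complex.one_im]
  ring

lemma schwarz_pick_bound (g : ℂ → ℂ) (hd : DifferentiableOn ℂ g (ball 0 1))
    (hmaps : MapsTo g (ball (0:ℂ) 1) (ball (0:ℂ) 1)) (h0 : g 0 = 0)
    (h0' : ‖deriv g 0‖ < 1) {r : ℝ} (hr0 : 0 < r) (hr1 : r < 1)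
    {z : ℂ} (hz : ‖z‖ = r) :
    ‖g z‖ * (1 + ‖deriv g 0‖ * r)
      ≤ r * (‖deriv g 0‖ + r) := by
  set a := deriv g 0 with ha
  set c := ‖a‖ with hc
  have hc0 : 0 ≤ c := norm_nonneg a
  have hzball : z ∈ ball (0:ℂ) 1 := by simp [mem_ball, Complex.dist_eq, hz, hr1]
  have hz0 : z ≠ 0 := by
    intro h; rw [h] at hz; simp at hz; exact hr0.ne hz
  set ψ := dslope g 0 with hψ
  have hψd : DifferentiableOn ℂ ψ (ball 0 1) :=
    (differentiableOn_dslope (ball_mem_nhds 0 one_pos)).2 hd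
  have hψ0 : ψ 0 = a := dslope_same g 0
  have hmaps' : MapsTo g (ball (0:ℂ) 1) (ball (g 0) 1) := by rwa [h0]
  have hψle : ∀ w ∈ ball (0:ℂ) 1, ‖ψ w‖ ≤ 1 := by
    intro w hw
    have := norm_dslope_le_div_of_mapsTo_ball hd (hmaps'.mono_right ball_subset_closedBall) hw
    simpa using this
  have hψlt : ∀ w ∈ ball (0:ℂ) 1, ‖ψ w‖ < 1 := by
    intro w hw
    rcases lt_or_ge (‖ψ w‖) 1 with h | h
    · exact h
    · exfalso
      have heq : ‖ψ w‖ = 1 := le_antisymm (hψle w hw) h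
      have hmax : IsMaxOn (norm ∘ ψ) (ball (0:ℂ) 1) w := by
        intro x hx
        simp only [Function.comp_apply]
        rw [heq]; exact hψle x hx
      have := Complex.eqOn_of_isPreconnected_of_isMaxOn_norm
        (convex_ball (0:ℂ) 1).isPreconnected isOpen_ball hψd hw hmax
      have h01 : (0:ℂ) ∈ ball (0:ℂ) 1 := by simp
      have : ψ 0 = ψ w := this h01
      rw [hψ0] at this
      rw [← this] at heq
      exact absurd heq (by rw [← hc]; exact h0'.ne)
  -- the Möbius transform
  set φ : ℂ → ℂ := fun w => (ψ w - a) / (1 - (starRingEnd ℂ) a * ψ w) with hφ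
  have hden : ∀ w ∈ ball (0:ℂ) 1, 1 - (starRingEnd ℂ) a * ψ w ≠ 0 := by
    intro w hw h
    have : ‖(starRingEnd ℂ) a * ψ w‖ = 1 := by
      have := sub_eq_zero.1 h; rw [← this]; simp
    rw [norm_mul, Complex.norm_conj] at this
    have := hψlt w hw
    nlinarith [norm_nonneg (ψ w)]
  have hφd : DifferentiableOn ℂ φ (ball 0 1) := by
    apply DifferentiableOn.div
    · exact hψd.sub (differentiableOn_const a)
    · exact (differentiableOn_const _).sub ((differentiableOn_const _).mul hψd)
    · exact hden
  have hφ0 : φ 0 = 0 := by simp [hφ, hψ0]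
  have hφlt : ∀ w ∈ ball (0:ℂ) 1, ‖φ w‖ < 1 := by
    intro w hw
    have hψw := hψlt w hw
    have key := mobius_key a (ψ w)
    have hdpos : 0 < ‖1 - (starRingEnd ℂ) a * ψ w‖ :=
      (norm_pos_iff.2 (hden w hw))
    have hsq : (‖ψ w - a‖)^2 < (‖1 - (starRingEnd ℂ) a * ψ w‖)^2 := by
      nlinarith [key, mul_pos (show (0:ℝ) < 1 - (‖a‖)^2 by nlinarith [hc0])
        (show (0:ℝ) < 1 - (‖ψ w‖)^2 by nlinarith [norm_nonneg (ψ w)])]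
    have := lt_of_pow_lt_pow_left₀ 2 (norm_nonneg _) hsq
    rw [hφ, norm_div, div_lt_one hdpos]
    exact this
  have hφmaps : MapsTo φ (ball (0:ℂ) 1) (ball (0:ℂ) 1) := by
    intro w hw
    simpa [mem_ball, Complex.dist_eq] using hφlt w hw
  have hφmaps' : MapsTo φ (ball (0:ℂ) 1) (ball (φ 0) 1) := by rwa [hφ0]
  -- Schwarz on φ
  have hschwarz : ‖φ z‖ ≤ r := by
    have := norm_dslope_le_div_of_mapsTo_ball hφd (hφmaps'.mono_right ball_subset_closedBall) hzball
    rw [dslope_of_ne _ hz0, slope_def_field, hφ0, sub_zero, sub_zero] at this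
    simp only [norm_div] at this
    rw [hz] at this
    have h' : ‖φ z‖ / r ≤ 1 := by simpa using this
    exact (div_le_one hr0).1 h'
  -- translate into the bound on ψ z
  set w := ψ z with hw
  set s := ‖w‖ with hs
  have hwball := hzball
  have hineq : ‖w - a‖ ≤ r * ‖1 - (starRingEnd ℂ) a * w‖ := by
    have hd0 := hden z hzball
    have : ‖φ z‖ = ‖w - a‖ / ‖1 - (starRingEnd ℂ) a * w‖ := by
      rw [hφ, norm_div]
    rw [this, div_le_iff₀ (norm_pos_iff.2 hd0)] at hschwarz
    linarith [hschwarz]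
  have e1 : (‖w - a‖)^2 = s^2 - 2*((w * (starRingEnd ℂ) a).re) + c^2 := by
    simp only [hs, hc, Complex.sq_norm, Complex.normSq_apply, Complex.sub_re, Complex.sub_im,
      Complex.mul_re, Complex.mul_im, Complex.conj_re, Complex.conj_im]
    ring
  have e2 : (‖1 - (starRingEnd ℂ) a * w‖)^2
      = 1 - 2*((w * (starRingEnd ℂ) a).re) + c^2*s^2 := by
    simp only [hs, hc, Complex.sq_norm, Complex.normSq_apply, Complex.sub_re, Complex.sub_im,
      Complex.mul_re, Complex.mul_im, Complex.conj_re, Complex.conj_im, Complex.one_re,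
      Complex.one_im]
    ring
  have hp : (w * (starRingEnd ℂ) a).re ≤ s * c := by
    calc (w * (starRingEnd ℂ) a).re ≤ ‖w * (starRingEnd ℂ) a‖ := Complex.re_le_norm _
    _ = s * c := by rw [norm_mul, Complex.norm_conj]
  have hsq : s^2 - 2*((w * (starRingEnd ℂ) a).re) + c^2
      ≤ r^2 * (1 - 2*((w * (starRingEnd ℂ) a).re) + c^2*s^2) := by
    rw [← e1, ← e2]
    calc (‖w - a‖)^2 ≤ (r * ‖1 - (starRingEnd ℂ) a * w‖)^2 := by
          apply pow_le_pow_left₀ (norm_nonneg _) hineq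
      _ = r^2 * (‖1 - (starRingEnd ℂ) a * w‖)^2 := by ring
  have hmain : s * (1 + c*r) ≤ c + r :=
    quad_aux (norm_nonneg w) hc0 h0' hr0 hr1 hp hsq
  -- g z = ψ z * z
  have hgz : ‖g z‖ = s * r := by
    have hgzeq : g z = ψ z * z := by
      rw [hψ, dslope_of_ne _ hz0, slope_def_field, h0, sub_zero, sub_zero]
      field_simp
    rw [hgzeq, norm_mul, ← hw, ← hs, hz]
  rw [hgz]
  nlinarith [hmain, hr0.le]


/-- Let `g` be holomorphic on the unit disk with `g(𝔻) ⊆ 𝔻`, not the identity,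
`g 0 = 0` and `|g'(0)| < 1`, and suppose `g` extends holomorphically to a neighborhood
`U` of `ζ ∈ ∂𝔻` with `g ζ = ζ`, `g'(ζ)` real and positive, mapping the arc of `∂𝔻` in
`U` into `∂𝔻`. Then `ζ` is a repelling fixed point: `g'(ζ) > 1`. -/
theorem boundary_fixed_point_repelling
    (g : ℂ → ℂ) (U : Set ℂ) (hU : IsOpen U) (ζ : ℂ) (hζ : ‖ζ‖ = 1)
    (hζU : ζ ∈ U)
    (hdiff : DifferentiableOn ℂ g (ball (0 : ℂ) 1 ∪ U))
    (hmaps : MapsTo g (ball (0 : ℂ) 1) (ball (0 : ℂ) 1))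
    (hnotid : ∃ z ∈ ball (0 : ℂ) 1, g z ≠ z)
    (h0 : g 0 = 0) (h0' : ‖deriv g 0‖ < 1)
    (hfix : g ζ = ζ)
    (hreal : (deriv g ζ).im = 0) (hpos : 0 < (deriv g ζ).re)
    (harc : ∀ z ∈ U, ‖z‖ = 1 → ‖g z‖ = 1) :
    1 < (deriv g ζ).re := by
  set c := ‖deriv g 0‖ with hc
  have hc0 : 0 ≤ c := norm_nonneg _
  have hdball : DifferentiableOn ℂ g (ball 0 1) := hdiff.mono subset_union_left
  have hζ0 : ζ ≠ 0 := by intro h; rw [h] at hζ; simp at hζ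
  have hder : HasDerivAt g (deriv g ζ) ζ := by
    have hmem : (ball (0:ℂ) 1 ∪ U) ∈ 𝓝 ζ :=
      Filter.mem_of_superset (hU.mem_nhds hζU) subset_union_right
    exact (hdiff.differentiableAt hmem).hasDerivAt
  have hslope : Filter.Tendsto (slope g ζ) (𝓝[≠] ζ) (𝓝 (deriv g ζ)) :=
    hasDerivAt_iff_tendsto_slope.1 hder
  have hmap : Filter.Tendsto (fun r : ℝ => (r:ℂ) * ζ) (𝓝[<] (1:ℝ)) (𝓝[≠] ζ) := by
    rw [tendsto_nhdsWithin_iff]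
    constructor
    · have h1 : Filter.Tendsto (fun r : ℝ => (r:ℂ) * ζ) (𝓝 (1:ℝ)) (𝓝 (((1:ℝ):ℂ)*ζ)) :=
        (Complex.continuous_ofReal.mul continuous_const).tendsto 1
      simpa using h1.mono_left nhdsWithin_le_nhds
    · filter_upwards [self_mem_nhdsWithin] with r hr
      simp only [mem_compl_iff, mem_singleton_iff]
      intro h
      have : (r:ℂ) = 1 := by
        have := mul_right_cancel₀ hζ0 (h.trans (one_mul ζ).symm)
        exact this
      have : r = 1 := by exact_mod_cast this
      exact absurd this (ne_of_lt hr)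
  have htend : Filter.Tendsto (fun r:ℝ => ‖slope g ζ ((r:ℂ)*ζ)‖)
      (𝓝[<] (1:ℝ)) (𝓝 (‖deriv g ζ‖)) :=
    (continuous_norm.tendsto _).comp (hslope.comp hmap)
  have hbnd : ∀ᶠ r : ℝ in 𝓝[<] (1:ℝ),
      (1+r)/(1+c*r) ≤ ‖slope g ζ ((r:ℂ)*ζ)‖ := by
    filter_upwards [Ioo_mem_nhdsLT_of_mem
      (show (1:ℝ) ∈ Ioc (0:ℝ) 1 by constructor <;> norm_num)] with r hr
    obtain ⟨hr0, hr1⟩ := hr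
    set z := (r:ℂ)*ζ with hzdef
    have hzabs : ‖z‖ = r := by
      rw [hzdef, norm_mul, Complex.norm_real, Real.norm_eq_abs, hζ, mul_one, abs_of_pos hr0]
    have hSP := schwarz_pick_bound g hdball hmaps h0 h0' hr0 hr1 hzabs
    have h1 : 1 - ‖g z‖ ≤ ‖g z - ζ‖ := by
      have h := norm_sub_norm_le ζ (g z)
      rw [hζ, norm_sub_rev] at h
      linarith
    have hz1 : ‖z - ζ‖ = 1 - r := by
      have he : z - ζ = (((r-1:ℝ)):ℂ)*ζ := by rw [hzdef]; push_cast; ring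
      rw [he, norm_mul, Complex.norm_real, Real.norm_eq_abs, hζ, mul_one, abs_of_neg (by linarith)]
      ring
    have habs_slope : ‖slope g ζ z‖ = ‖g z - ζ‖ / (1-r) := by
      rw [slope_def_field, hfix, norm_div, hz1]
    rw [habs_slope, div_le_div_iff₀ (by positivity) (by linarith : (0:ℝ) < 1-r)]
    nlinarith [hSP, mul_le_mul_of_nonneg_right h1 (by positivity : (0:ℝ) ≤ 1+c*r)]
  have hlim2 : Filter.Tendsto (fun r:ℝ => (1+r)/(1+c*r)) (𝓝[<] (1:ℝ)) (𝓝 (2/(1+c))) := by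
    have hca : ContinuousAt (fun r:ℝ => (1+r)/(1+c*r)) 1 := by
      apply ContinuousAt.div
      · fun_prop
      · fun_prop
      · nlinarith
    have h2 := hca.tendsto.mono_left (nhdsWithin_le_nhds (s := Iio (1:ℝ)))
    convert h2 using 2
    norm_num
  have hge : 2/(1+c) ≤ ‖deriv g ζ‖ := le_of_tendsto_of_tendsto hlim2 htend hbnd
  have h2 : 1 < 2/(1+c) := by rw [lt_div_iff₀ (by linarith)]; linarith
  have habs : ‖deriv g ζ‖ = (deriv g ζ).re := by
    rw [Complex.norm_def, Complex.normSq_apply, hreal]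
    simp only [mul_zero, add_zero]
    exact Real.sqrt_mul_self hpos.le
  linarith [habs ▸ hge]
end

section
/- Let h : ℂ → ℂ be a nonconstant entire function (more generally, meromorphic) and B ⊂ ℂ a bounded topological disk whose boundary β is a simple closed curve containing no critical values of h. If W is an unbounded connected component of h^{-1}(B), then the boundary ∂W is unbounded, i.e., ∂W is not contained in any compact subset of ℂ. -/
open Complex Set Metric Bornology

/-- The complement of a closed ball in `ℂ` is path connected. -/
lemma isPathConnected_compl_closedBall_aux {R : ℝ} (hR : 0 ≤ R) :
    IsPathConnected ((Metric.closedBall (0:ℂ) R)ᶜ) := by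
  have base : IsPathConnected ({(0:ℂ)}ᶜ) :=
    isPathConnected_compl_singleton_of_one_lt_rank
      (by rw [rank_real_complex]; norm_num) 0
  have key : (fun y : ℂ => (((R + ‖y‖) / ‖y‖ : ℝ) : ℂ) * y) '' {(0:ℂ)}ᶜ
      = (Metric.closedBall (0:ℂ) R)ᶜ := by
    ext z
    simp only [mem_image, mem_compl_iff, Metric.mem_closedBall, dist_zero_right,
      mem_singleton_iff, not_le]
    constructor
    · rintro ⟨y, hy, rfl⟩
      have hy' : (0:ℝ) < ‖y‖ := norm_pos_iff.mpr hy
      have : ‖(((R + ‖y‖) / ‖y‖ : ℝ) : ℂ) * y‖ = R + ‖y‖ := by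
        rw [norm_mul, Complex.norm_real, Real.norm_eq_abs,
          abs_of_pos (by positivity), div_mul_cancel₀]
        exact hy'.ne'
      linarith [this]
    · intro hz
      have hz0 : z ≠ 0 := by
        intro h0; rw [h0, norm_zero] at hz; linarith
      have hz' : (0:ℝ) < ‖z‖ := norm_pos_iff.mpr hz0
      refine ⟨(((‖z‖ - R) / ‖z‖ : ℝ) : ℂ) * z, ?_, ?_⟩
      · intro h0
        rcases mul_eq_zero.mp h0 with h1 | h1
        · have h2 : (‖z‖ - R) / ‖z‖ = 0 := by exact_mod_cast h1
          rcases div_eq_zero_iff.mp h2 with h3 | h3 <;> linarith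
        · exact hz0 h1
      · have hn : ‖(((‖z‖ - R) / ‖z‖ : ℝ) : ℂ) * z‖ = ‖z‖ - R := by
          rw [norm_mul, Complex.norm_real, Real.norm_eq_abs,
            abs_of_pos (div_pos (by linarith) hz'), div_mul_cancel₀]
          exact hz'.ne'
        rw [hn]
        rw [← mul_assoc, ← Complex.ofReal_mul]
        have : (R + (‖z‖ - R)) / (‖z‖ - R) * ((‖z‖ - R) / ‖z‖) = 1 := by
          have h1 : ‖z‖ - R ≠ 0 := by linarith
          have h2 : ‖z‖ ≠ 0 := hz'.ne'
          field_simp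
          ring
        rw [this]; simp
  rw [← key]
  apply base.image'
  apply ContinuousOn.mul _ continuousOn_id
  exact (Complex.continuous_ofReal.comp_continuousOn
    (((continuous_const.add continuous_norm).continuousOn).div
      continuous_norm.continuousOn (fun y hy => norm_ne_zero_iff.mpr hy)))

/-- Let `h` be a nonconstant entire function and `B` a bounded topological disk whose
boundary is a simple closed curve (parametrized by the 1-periodic injective loop `c`)
containing no critical values of `h`. If `W` is an unbounded connected component of
`h⁻¹(B)`, then `∂W` is unbounded, i.e. not contained in any compact subset of `ℂ`. -/
theorem boundary_of_unbounded_preimage_component_unbounded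
    (h : ℂ → ℂ) (hh : Differentiable ℂ h) (hnc : ∀ a : ℂ, h ≠ fun _ => a)
    (B : Set ℂ) (hBo : IsOpen B) (hBb : Bornology.IsBounded B) (hBc : IsConnected B)
    (hBsc : SimplyConnectedSpace B)
    (c : ℝ → ℂ) (hc : Continuous c) (hcp : ∀ t, c (t + 1) = c t)
    (hci : InjOn c (Ico 0 1)) (hcr : range c = frontier B)
    (hcrit : ∀ z : ℂ, deriv h z = 0 → h z ∉ frontier B)
    (W : Set ℂ) (x : ℂ) (hW : W = connectedComponentIn (h ⁻¹' B) x)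
    (hWu : ¬ Bornology.IsBounded W) :
    ¬ Bornology.IsBounded (frontier W) := by
  intro hb
  -- W is an open subset of h ⁻¹' B
  have hWo : IsOpen W := by
    rw [hW]; exact (hBo.preimage hh.continuous).connectedComponentIn
  have hWsub : W ⊆ h ⁻¹' B := by
    rw [hW]; exact connectedComponentIn_subset _ _
  -- enclose frontier W in a closed ball
  obtain ⟨R, hR0, hR⟩ := hb.subset_closedBall_lt 0 0
  set C : Set ℂ := (Metric.closedBall (0:ℂ) R)ᶜ with hC
  have hCc : IsPreconnected C :=
    (isPathConnected_compl_closedBall_aux hR0.le).isConnected.isPreconnected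
  -- W meets C
  obtain ⟨w, hwW, hwC⟩ : ∃ w, w ∈ W ∧ w ∈ C := by
    by_contra hcon
    push_neg at hcon
    exact hWu (Metric.isBounded_closedBall.subset fun y hy => by
      by_contra hy'; exact (hcon y hy) hy')
  -- there is a point of C outside h ⁻¹' B (else h is bounded, hence constant)
  obtain ⟨z, hzC, hzB⟩ : ∃ z, z ∈ C ∧ h z ∉ B := by
    by_contra hcon
    push_neg at hcon
    have hbdd : Bornology.IsBounded (range h) := by
      have h1 : range h ⊆ h '' (Metric.closedBall 0 R) ∪ B := by
        rintro - ⟨y, rfl⟩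
        by_cases hy : y ∈ Metric.closedBall (0:ℂ) R
        · exact Or.inl ⟨y, hy, rfl⟩
        · exact Or.inr (hcon y hy)
      exact ((((isCompact_closedBall _ _).image hh.continuous).isBounded).union hBb).subset h1
    exact hnc (h 0) (funext fun a => hh.apply_eq_apply_of_bounded hbdd a 0)
  have hzW : z ∉ W := fun hz => hzB (hWsub hz)
  -- C avoids frontier W, meets both W and its complement: contradiction
  have hdisj : C ⊆ W ∪ (closure W)ᶜ := by
    intro y hy
    by_cases hyW : y ∈ closure W
    · left
      rcases (closure_eq_self_union_frontier W ▸ hyW) with h1 | h1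
      · exact h1
      · exact absurd (hR h1) hy
    · exact Or.inr hyW
  have := hCc W (closure W)ᶜ hWo isClosed_closure.isOpen_compl hdisj
    ⟨w, hwC, hwW⟩ ⟨z, hzC, fun hz => hzW (by
      rcases (closure_eq_self_union_frontier W ▸ hz) with h1 | h1
      · exact h1
      · exact absurd (hR h1) hzC)⟩
  obtain ⟨y, -, hy1, hy2⟩ := this
  exact hy2 (subset_closure hy1)
end
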